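/- arXiv:0807.0706 — 3 statements merged into one kernel-verified Lean document; each statement's English description precedes it below -/
import Mathlib

section
/- Let φ : R → S be a faithfully flat homomorphism of commutative noetherian rings. Then φ is an injective R-module map, and the cokernel S/φ(R) is a flat R-module. -/
/-!
Let `φ : R → S` be a faithfully flat homomorphism of commutative noetherian rings
(encoded as a faithfully flat `R`-algebra structure on `S`). Then `φ` is injective,
and the cokernel `S / φ(R)` is a flat `R`-module.
-/

universe u

section aux

variable (R S : Type u) [CommRing R] [CommRing S] [Algebra R S] [Module.FaithfullyFlat R S]

/-- For a faithfully flat algebra `S`, the map `n ↦ 1 ⊗ n` is injective on elements. -/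
lemma ff_one_tmul_eq_zero {N : Type u} [AddCommGroup N] [Module R N] (n : N)
    (h : (1 : S) ⊗ₜ[R] n = 0) : n = 0 := by
  have hf : LinearMap.toSpanSingleton R N n = 0 := by
    rw [Module.FaithfullyFlat.zero_iff_lTensor_zero R S]
    apply TensorProduct.ext'
    intro s r
    have hs : s ⊗ₜ[R] n = 0 := by
      have : s ⊗ₜ[R] n = s • ((1 : S) ⊗ₜ[R] n) := by
        rw [TensorProduct.smul_tmul', smul_eq_mul, mul_one]
      rw [this, h, smul_zero]
    simp only [LinearMap.lTensor_tmul, LinearMap.toSpanSingleton_apply, LinearMap.zero_apply]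
    rw [TensorProduct.tmul_smul, hs, smul_zero]
  have := congrArg (fun f => f 1) (congrArg DFunLike.coe hf)
  simpa using this

lemma ff_algebraMap_injective : Function.Injective (algebraMap R S) := by
  rw [injective_iff_map_eq_zero]
  intro r hr
  apply ff_one_tmul_eq_zero R S (N := R) r
  have h1 : (1 : S) ⊗ₜ[R] r = (r • (1 : S)) ⊗ₜ[R] (1 : R) := by
    rw [TensorProduct.smul_tmul, smul_eq_mul, mul_one]
  rw [h1, Algebra.smul_def, mul_one, hr, TensorProduct.zero_tmul]

lemma ff_mem_of_map_mem (I : Ideal R) (r : R)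
    (hr : algebraMap R S r ∈ I.map (algebraMap R S)) : r ∈ I := by
  have h0 : (1 : S) ⊗ₜ[R] (Ideal.Quotient.mk I r) = 0 := by
    apply (TensorProduct.tensorQuotEquivQuotSMul S I).injective
    rw [map_zero]
    have : (TensorProduct.tensorQuotEquivQuotSMul S I) ((1 : S) ⊗ₜ[R] (Ideal.Quotient.mk I r))
        = Submodule.Quotient.mk (r • (1 : S)) := by
      simp [TensorProduct.tensorQuotEquivQuotSMul, TensorProduct.quotTensorEquivQuotSMul_mk_tmul]
    rw [this, Submodule.Quotient.mk_eq_zero]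
    rw [Ideal.smul_top_eq_map]
    simpa [Algebra.smul_def] using hr
  have := ff_one_tmul_eq_zero R S _ h0
  rwa [← Ideal.Quotient.eq_zero_iff_mem]

end aux

theorem injective_and_flat_cokernel_of_faithfullyFlat
    (R S : Type u) [CommRing R] [CommRing S] [IsNoetherianRing R] [IsNoetherianRing S]
    [Algebra R S] [Module.FaithfullyFlat R S] :
    Function.Injective (algebraMap R S) ∧
      Module.Flat R (S ⧸ LinearMap.range (Algebra.linearMap R S)) := by
  set K := LinearMap.range (Algebra.linearMap R S)
  set Q := S ⧸ K
  set π : S →ₗ[R] Q := K.mkQ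
  refine ⟨ff_algebraMap_injective R S, ?_⟩
  rw [Module.Flat.iff_rTensor_injective']
  intro I
  rw [injective_iff_map_eq_zero]
  intro x hx
  -- lift x to I ⊗ S
  obtain ⟨y, rfl⟩ := LinearMap.lTensor_surjective (↥I) (g := π) K.mkQ_surjective x
  -- the multiplication map I ⊗ S → S
  set j : TensorProduct R (↥I) S →ₗ[R] S :=
    (TensorProduct.lid R S).toLinearMap ∘ₗ LinearMap.rTensor S I.subtype with hj
  -- commutativity: π (j y) = lid (rTensor Q I.subtype (lTensor I π y)) = 0
  have hcomm : π.comp j =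
      (TensorProduct.lid R Q).toLinearMap ∘ₗ (LinearMap.rTensor Q I.subtype) ∘ₗ
        (LinearMap.lTensor (↥I) π) := by
    apply TensorProduct.ext'
    intro i s
    simp [hj, π, map_smul]
  have hπjy : π (j y) = 0 := by
    have := congrArg (fun f => f y) (congrArg DFunLike.coe hcomm)
    simp only [LinearMap.comp_apply, LinearMap.coe_comp, Function.comp_apply,
      LinearEquiv.coe_coe] at this ⊢
    rw [this, hx, map_zero]
  -- j y lies in the image of I in S
  have hjy_mem : ∀ w : TensorProduct R (↥I) S, j w ∈ (I.map (algebraMap R S) : Ideal S) := by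
    intro w
    induction w using TensorProduct.induction_on with
    | zero => simp
    | tmul i s =>
        have : j (i ⊗ₜ[R] s) = (i : R) • s := by simp [hj]
        rw [this, Algebra.smul_def]
        exact Ideal.mul_mem_right _ _ (Ideal.mem_map_of_mem _ i.2)
    | add a b ha hb => rw [map_add]; exact Ideal.add_mem _ ha hb
  -- j y = algebraMap r for some r
  have hjy_range : j y ∈ K := by
    rwa [← Submodule.Quotient.mk_eq_zero, ← Submodule.mkQ_apply]
  obtain ⟨r, hr⟩ := hjy_range
  have hrI : r ∈ I := by
    apply ff_mem_of_map_mem R S I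
    have : algebraMap R S r = j y := hr
    rw [this]; exact hjy_mem y
  -- the canonical element of I ⊗ S with the same image
  set z : TensorProduct R (↥I) S := (⟨r, hrI⟩ : ↥I) ⊗ₜ[R] (1 : S) with hz
  have hjz : j z = j y := by
    have : j z = r • (1 : S) := by simp [hj, hz]
    rw [this, Algebra.smul_def, mul_one]
    exact hr
  -- flatness of S gives y = z
  have hS_flat : Function.Injective (LinearMap.rTensor S I.subtype) :=
    Module.Flat.iff_rTensor_injective'.mp (inferInstance : Module.Flat R S) I
  have hyz : y = z :=
    hS_flat ((TensorProduct.lid R S).injective (by simpa [hj] using hjz.symm))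
  -- conclude
  rw [hyz, hz]
  have hπ1 : π (1 : S) = 0 :=
    (Submodule.Quotient.mk_eq_zero K).mpr ⟨1, by simp⟩
  simp [hπ1]
end

section
/- Let Q be a nonzero commutative noetherian ring and set R = Q[X]/(X²). Then the cyclic R-module R/(X) is Gorenstein flat but not flat. -/
/-!
Let `Q` be a nonzero commutative noetherian ring and `R = Q[X]/(X²)` the ring of dual
numbers. Then the cyclic `R`-module `R/(X)` is Gorenstein flat but not flat.
-/

universe u

open CategoryTheory Polynomial

/-- A witness that `G` is a Gorenstein flat `R`-module: an exact complex `F` of flat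
`R`-modules (with differentials `d i : F (i+1) →ₗ[R] F i`) such that `E ⊗_R F` is exact
for every injective `R`-module `E`, together with an isomorphism `G ≅ im (F 0 → F (-1))`. -/
structure GorensteinFlatWitness (R : Type u) [CommRing R]
    (G : Type u) [AddCommGroup G] [Module R G] : Type (u + 1) where
  F : ℤ → Type u
  [acg : ∀ i, AddCommGroup (F i)]
  [mod : ∀ i, Module R (F i)]
  flat : ∀ i, Module.Flat R (F i)
  d : ∀ i : ℤ, F (i + 1) →ₗ[R] F i
  d_comp_d : ∀ i : ℤ, (d i).comp (d (i + 1)) = 0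
  exact : ∀ i : ℤ, LinearMap.ker (d i) = LinearMap.range (d (i + 1))
  tensor_exact : ∀ (E : Type u) [AddCommGroup E] [Module R E], Module.Injective R E →
    ∀ i : ℤ, LinearMap.ker (LinearMap.lTensor E (d i)) =
      LinearMap.range (LinearMap.lTensor E (d (i + 1)))
  im_iso : Nonempty (G ≃ₗ[R] LinearMap.range (d (-1)))

/-- `G` is a Gorenstein flat `R`-module. -/
def IsGorensteinFlat (R : Type u) [CommRing R]
    (G : Type u) [AddCommGroup G] [Module R G] : Prop :=
  Nonempty (GorensteinFlatWitness R G)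

/-- The ring of dual numbers `Q[X]/(X²)`. -/
noncomputable abbrev DualNumbersRing (Q : Type u) [CommRing Q] : Type u :=
  Polynomial Q ⧸ (Ideal.span {(X : Polynomial Q) ^ 2})

/-- The image of `X` in `Q[X]/(X²)`. -/
noncomputable def dualX (Q : Type u) [CommRing Q] : DualNumbersRing Q :=
  Ideal.Quotient.mk (Ideal.span {(X : Polynomial Q) ^ 2}) X

section Abstract

variable (R : Type u) [CommRing R] (x : R)

/-- Multiplication by `x` as an `R`-linear map. -/
noncomputable def mulx : R →ₗ[R] R := LinearMap.lsmul R R x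

lemma mulx_apply (r : R) : mulx R x r = x * r := rfl

variable (hx : x * x = 0) (hann : ∀ r : R, x * r = 0 ↔ r ∈ Ideal.span {x})

include hann in
lemma ker_mulx : LinearMap.ker (mulx R x) = Ideal.span {x} := by
  ext r
  rw [LinearMap.mem_ker, mulx_apply]
  exact hann r

lemma range_mulx : LinearMap.range (mulx R x) = Ideal.span {x} := by
  ext r
  rw [LinearMap.mem_range, Ideal.mem_span_singleton]
  constructor
  · rintro ⟨s, rfl⟩; exact Dvd.intro _ rfl
  · rintro ⟨s, rfl⟩; exact ⟨s, rfl⟩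

include hann in
/-- In an injective module, anything killed by `x` is divisible by `x`. -/
lemma injective_div (E : Type u) [AddCommGroup E] [Module R E]
    (hE : Module.Injective R E)
    (e : E) (he : x • e = 0) : ∃ e', e = x • e' := by
  let φ : R →ₗ[R] E := LinearMap.toSpanSingleton R E e
  have hker : LinearMap.ker (mulx R x) ≤ LinearMap.ker φ := by
    intro r hr
    rw [ker_mulx R x hann, Ideal.mem_span_singleton] at hr
    obtain ⟨s, rfl⟩ := hr
    simp only [LinearMap.mem_ker, φ, LinearMap.toSpanSingleton_apply]
    rw [mul_comm, mul_smul, he, smul_zero]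
  let g : (R ⧸ LinearMap.ker (mulx R x)) →ₗ[R] E := Submodule.liftQ _ φ hker
  let eqv := (mulx R x).quotKerEquivRange
  let g' : LinearMap.range (mulx R x) →ₗ[R] E := g ∘ₗ (eqv.symm : _ →ₗ[R] _)
  obtain ⟨h, hh⟩ := hE.out (LinearMap.range (mulx R x)).subtype
    (Submodule.injective_subtype _) g'
  have hxmem : x ∈ LinearMap.range (mulx R x) := ⟨1, by rw [mulx_apply, mul_one]⟩
  have key : h x = e := by
    have h1 : eqv (Submodule.Quotient.mk (1 : R)) = ⟨x, hxmem⟩ := by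
      apply Subtype.ext
      rw [show eqv = (mulx R x).quotKerEquivRange from rfl,
        LinearMap.quotKerEquivRange_apply_mk, mulx_apply, mul_one]
    have h2 : eqv.symm ⟨x, hxmem⟩ = Submodule.Quotient.mk (1 : R) := by
      rw [← h1, LinearEquiv.symm_apply_apply]
    have := hh ⟨x, hxmem⟩
    rw [Submodule.subtype_apply] at this
    rw [this]
    show g (eqv.symm ⟨x, hxmem⟩) = e
    rw [h2]
    show φ 1 = e
    simp [φ]
  refine ⟨h 1, ?_⟩
  rw [← key]
  calc h x = h (x • 1) := by rw [smul_eq_mul, mul_one]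
  _ = x • h 1 := by rw [map_smul]

lemma lTensor_mulx (E : Type u) [AddCommGroup E] [Module R E] :
    LinearMap.lTensor E (mulx R x) =
      LinearMap.lsmul R (TensorProduct R E R) x := by
  apply TensorProduct.ext'
  intro e r
  rw [LinearMap.lTensor_tmul, LinearMap.lsmul_apply, mulx_apply, ← smul_eq_mul,
    TensorProduct.tmul_smul]

include hx in
lemma exact_of_div (N : Type u) [AddCommGroup N] [Module R N]
    (hdiv : ∀ n : N, x • n = 0 → ∃ n', n = x • n') :
    LinearMap.ker (LinearMap.lsmul R N x) = LinearMap.range (LinearMap.lsmul R N x) := by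
  ext n
  rw [LinearMap.mem_ker, LinearMap.mem_range]
  simp only [LinearMap.lsmul_apply]
  constructor
  · intro h
    obtain ⟨n', hn'⟩ := hdiv n h
    exact ⟨n', hn'.symm⟩
  · rintro ⟨n', rfl⟩
    rw [smul_smul, hx, zero_smul]

include hann in
lemma div_tensor (E : Type u) [AddCommGroup E] [Module R E]
    (hE : Module.Injective R E) :
    ∀ t : TensorProduct R E R, x • t = 0 → ∃ t', t = x • t' := by
  intro t ht
  let ρ := TensorProduct.rid R E
  obtain ⟨e', he'⟩ := injective_div R x hann E hE (ρ t) (by rw [← map_smul, ht, map_zero])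
  exact ⟨ρ.symm e', by rw [← map_smul, ← he', LinearEquiv.symm_apply_apply]⟩

include hx hann in
lemma abstract_not_flat [Nontrivial R] (hxne : x ≠ 0) :
    ¬ Module.Flat R (R ⧸ Ideal.span {x}) := by
  intro hF
  set M := (R ⧸ Ideal.span {x}) with hM
  have hT : LinearMap.lTensor M (mulx R x) = 0 := by
    apply TensorProduct.ext'
    intro m r
    obtain ⟨s, rfl⟩ := Submodule.Quotient.mk_surjective _ m
    have hxm : x • (Submodule.Quotient.mk s : M) = 0 := by
      rw [← Submodule.Quotient.mk_smul, Submodule.Quotient.mk_eq_zero, smul_eq_mul]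
      exact Ideal.mem_span_singleton.mpr (Dvd.intro _ rfl)
    rw [LinearMap.lTensor_tmul, mulx_apply, LinearMap.zero_apply, ← smul_eq_mul]
    calc (Submodule.Quotient.mk s : M) ⊗ₜ[R] (x • r)
        = x • ((Submodule.Quotient.mk s : M) ⊗ₜ[R] r) := TensorProduct.tmul_smul _ _ _
      _ = (x • (Submodule.Quotient.mk s : M)) ⊗ₜ[R] r := TensorProduct.smul_tmul' _ _ _
      _ = (0 : M) ⊗ₜ[R] r := by rw [hxm]
      _ = 0 := TensorProduct.zero_tmul _ _
  have hexact : Function.Exact (mulx R x) (mulx R x) := by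
    rw [LinearMap.exact_iff, ker_mulx R x hann, range_mulx R x]
  have hex2 := Module.Flat.lTensor_exact M hexact
  have hzero : ∀ t : TensorProduct R M R, t = 0 := by
    intro t
    obtain ⟨sE, hs⟩ := (hex2 t).mp (by rw [hT, LinearMap.zero_apply])
    rw [hT, LinearMap.zero_apply] at hs
    exact hs.symm
  have h1 : (Submodule.Quotient.mk 1 : M) = 0 := by
    have h0 := hzero ((Submodule.Quotient.mk 1 : M) ⊗ₜ[R] 1)
    have h2 : TensorProduct.rid R M ((Submodule.Quotient.mk 1 : M) ⊗ₜ[R] 1) =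
        TensorProduct.rid R M 0 := by rw [h0]
    rwa [TensorProduct.rid_tmul, one_smul, LinearEquiv.map_zero] at h2
  rw [Submodule.Quotient.mk_eq_zero, Ideal.mem_span_singleton] at h1
  obtain ⟨s, hs⟩ := h1
  apply hxne
  have hxx : x = x * (x * s) := by rw [← hs, mul_one]
  rw [hxx, ← mul_assoc, hx, zero_mul]


include hx hann in
lemma abstract_gorenstein : IsGorensteinFlat R (R ⧸ Ideal.span {x}) := by
  refine ⟨⟨fun _ => R, fun _ => inferInstance, fun _ => mulx R x, ?_, ?_, ?_, ?_⟩⟩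
  · intro i
    apply LinearMap.ext
    intro r
    show x • (x • r) = 0
    rw [smul_eq_mul, smul_eq_mul, ← mul_assoc, hx, zero_mul]
  · intro i
    rw [ker_mulx R x hann, range_mulx R x]
  · intro E _ _ hE i
    show LinearMap.ker (LinearMap.lTensor E (mulx R x)) =
      LinearMap.range (LinearMap.lTensor E (mulx R x))
    rw [lTensor_mulx]
    exact exact_of_div R x hx _ (div_tensor R x hann E hE)
  · exact ⟨(Submodule.quotEquivOfEq (Ideal.span {x}) (LinearMap.ker (mulx R x))
      (ker_mulx R x hann).symm).trans (mulx R x).quotKerEquivRange⟩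

end Abstract

section Concrete

variable (Q : Type u) [CommRing Q]

lemma x_mul_x : dualX Q * dualX Q = 0 := by
  rw [dualX, ← map_mul, ← sq, Ideal.Quotient.eq_zero_iff_mem]
  exact Ideal.subset_span rfl

lemma dualX_ne_zero [Nontrivial Q] : dualX Q ≠ 0 := by
  rw [dualX, Ne, Ideal.Quotient.eq_zero_iff_mem, Ideal.mem_span_singleton]
  rintro ⟨q, hq⟩
  have h1 : (X : Polynomial Q).coeff 1 = ((X : Polynomial Q) ^ 2 * q).coeff 1 := by rw [← hq]
  rw [coeff_X_one, sq, mul_assoc, mul_comm] at h1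
  have h2 : ((X * q * X : Polynomial Q)).coeff (0 + 1) = (X * q).coeff 0 := coeff_mul_X _ _
  rw [zero_add] at h2
  rw [h2, mul_coeff_zero, coeff_X_zero, zero_mul] at h1
  exact one_ne_zero h1

lemma mul_x_eq_zero_iff (r : DualNumbersRing Q) :
    dualX Q * r = 0 ↔ r ∈ Ideal.span {dualX Q} := by
  constructor
  · intro h
    obtain ⟨p, rfl⟩ := Ideal.Quotient.mk_surjective r
    rw [dualX, ← map_mul, Ideal.Quotient.eq_zero_iff_mem, Ideal.mem_span_singleton] at h
    obtain ⟨q, hq⟩ := h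
    have h2 : (X : Polynomial Q) * p = X * (X * q) := by rw [hq]; ring
    have hp : p = X * q := Polynomial.isRegular_X.left h2
    rw [Ideal.mem_span_singleton, hp, map_mul]
    exact Dvd.intro _ rfl
  · rintro h
    rw [Ideal.mem_span_singleton] at h
    obtain ⟨s, rfl⟩ := h
    rw [← mul_assoc, x_mul_x, zero_mul]

end Concrete


theorem dualNumbers_mod_X_isGorensteinFlat_not_flat
    (Q : Type u) [CommRing Q] [IsNoetherianRing Q] [Nontrivial Q] :
    IsGorensteinFlat (DualNumbersRing Q)
        (DualNumbersRing Q ⧸ Ideal.span {dualX Q}) ∧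
      ¬ Module.Flat (DualNumbersRing Q)
        (DualNumbersRing Q ⧸ Ideal.span {dualX Q}) := by
  have hnt : Nontrivial (DualNumbersRing Q) := nontrivial_of_ne _ 0 (dualX_ne_zero Q)
  exact ⟨abstract_gorenstein (DualNumbersRing Q) (dualX Q) (x_mul_x Q) (mul_x_eq_zero_iff Q),
    abstract_not_flat (DualNumbersRing Q) (dualX Q) (x_mul_x Q) (mul_x_eq_zero_iff Q)
      (dualX_ne_zero Q)⟩
end

section
/- Let (S, 𝔫, l) be a commutative noetherian local ring, let E be the injective hull of the residue field l as an S-module, and let B be an S-module with Hom_S(E, B) ≠ 0. Then 𝔫·Hom_S(E, B) ≠ Hom_S(E, B). -/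
/-!
Let `(S, 𝔫, l)` be a commutative noetherian local ring, `E` the injective hull of the
residue field `l` (encoded as an injective `S`-module together with an essential
embedding of `l`), and `B` an `S`-module with `Hom_S(E, B) ≠ 0`. Then
`𝔫 · Hom_S(E, B) ≠ Hom_S(E, B)`.
-/

universe u

theorem maximalIdeal_smul_hom_ne_top
    (S : Type u) [CommRing S] [IsNoetherianRing S] [IsLocalRing S]
    (E : Type u) [AddCommGroup E] [Module S E] (hE : Module.Injective S E)
    (ι : IsLocalRing.ResidueField S →ₗ[S] E) (hι : Function.Injective ι)
    (hess : ∀ N : Submodule S E, N ≠ ⊥ → LinearMap.range ι ⊓ N ≠ ⊥)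
    (B : Type u) [AddCommGroup B] [Module S B]
    (hB : ∃ f : E →ₗ[S] B, f ≠ 0) :
    (IsLocalRing.maximalIdeal S) • (⊤ : Submodule S (E →ₗ[S] B)) ≠ ⊤ := by
  classical
  set 𝔪 := IsLocalRing.maximalIdeal S with h𝔪
  obtain ⟨f0, hf0⟩ := hB
  obtain ⟨x, hx⟩ : ∃ x : E, f0 x ≠ 0 := by
    by_contra h
    push_neg at h
    exact hf0 (LinearMap.ext fun y => h y)
  have hxne : x ≠ 0 := by
    intro h; apply hx; rw [h, map_zero]
  -- Key fact: elements of `ι`'s range are killed by `𝔪`.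
  have hkill : ∀ c ∈ 𝔪, ∀ t : IsLocalRing.ResidueField S, c • ι t = 0 := by
    intro c hc t
    rw [← map_smul]
    have : c • t = 0 := by
      obtain ⟨u, rfl⟩ := Ideal.Quotient.mk_surjective t
      have : c • (Ideal.Quotient.mk 𝔪 u) = Ideal.Quotient.mk 𝔪 (c * u) := rfl
      change (c • (Ideal.Quotient.mk 𝔪 u : S ⧸ 𝔪)) = 0
      rw [this, Ideal.Quotient.eq_zero_iff_mem]
      exact Ideal.mul_mem_right _ _ hc
    rw [this, map_zero]
  -- Every `c ∈ 𝔪` acts nilpotently on `x`.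
  have hnil : ∀ c ∈ 𝔪, ∃ n : ℕ, c ^ n • x = 0 := by
    intro c hc
    by_contra h
    push_neg at h
    -- the chain of annihilators of `c^n • x` stabilizes
    set A : ℕ →o Ideal S :=
      ⟨fun n => (Submodule.span S {c ^ n • x}).annihilator, by
        intro m n hmn
        intro s hs
        rw [Submodule.mem_annihilator_span_singleton] at hs ⊢
        obtain ⟨k, rfl⟩ := Nat.exists_eq_add_of_le hmn
        rw [pow_add, mul_comm, mul_smul, smul_comm, hs, smul_zero]⟩ with hA
    obtain ⟨n, hn⟩ := monotone_stabilizes_iff_noetherian.mpr inferInstance A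
    have hy : c ^ n • x ≠ 0 := h n
    have hspan : Submodule.span S {c ^ n • x} ≠ ⊥ := by
      rwa [Ne, Submodule.span_singleton_eq_bot]
    obtain ⟨z, hz, hzne⟩ := Submodule.exists_mem_ne_zero_of_ne_bot
      (hess _ hspan)
    obtain ⟨hz1, hz2⟩ := Submodule.mem_inf.mp hz
    obtain ⟨t, rfl⟩ := hz1
    obtain ⟨s, hs⟩ := Submodule.mem_span_singleton.mp hz2
    -- `c • ι t = 0`, hence `s ∈ A (n+1) = A n`, hence `ι t = 0`, contradiction
    have hcz : s • (c ^ (n + 1) • x) = 0 := by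
      have h1 : c • s • c ^ n • x = 0 := by rw [hs]; exact hkill c hc t
      rw [smul_smul, smul_smul] at h1
      rw [smul_smul]
      have he : s * c ^ (n + 1) = c * s * c ^ n := by ring
      rw [he]; exact h1
    have hsA : s ∈ A (n + 1) := by
      rw [hA]
      exact Submodule.mem_annihilator_span_singleton _ _ |>.mpr hcz
    rw [← hn (n + 1) (Nat.le_succ n)] at hsA
    have : s • (c ^ n • x) = 0 :=
      Submodule.mem_annihilator_span_singleton _ _ |>.mp hsA
    rw [hs] at this
    exact hzne this
  -- Hence some power of `𝔪` kills `x`.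
  obtain ⟨N, hN⟩ : ∃ N : ℕ, ∀ c ∈ 𝔪 ^ N, c • x = 0 := by
    have hrad : 𝔪 ≤ (Submodule.span S {x}).annihilator.radical := by
      intro c hc
      obtain ⟨n, hn⟩ := hnil c hc
      exact ⟨n, Submodule.mem_annihilator_span_singleton _ _ |>.mpr hn⟩
    obtain ⟨k, hk⟩ := Ideal.exists_radical_pow_le_of_fg
      (Submodule.span S {x}).annihilator (IsNoetherian.noetherian _)
    refine ⟨k, fun c hc => ?_⟩
    have : c ∈ (Submodule.span S {x}).annihilator :=
      hk (Ideal.pow_right_mono hrad k hc)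
    exact Submodule.mem_annihilator_span_singleton _ _ |>.mp this
  -- Now assume `𝔪 • ⊤ = ⊤` and derive a contradiction.
  intro htop
  have hpow : ∀ n : ℕ, (𝔪 ^ n) • (⊤ : Submodule S (E →ₗ[S] B)) = ⊤ := by
    intro n
    induction n with
    | zero => rw [pow_zero, Ideal.one_eq_top, Submodule.top_smul]
    | succ n ih =>
      rw [pow_succ, ← Ideal.smul_eq_mul, Submodule.smul_assoc, htop, ih]
  have hf0mem : f0 ∈ (𝔪 ^ N) • (⊤ : Submodule S (E →ₗ[S] B)) := by
    rw [hpow N]; trivial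
  have : f0 x = 0 := by
    refine Submodule.smul_induction_on hf0mem ?_ ?_
    · intro c hc g _
      show (c • g) x = 0
      rw [LinearMap.smul_apply, ← map_smul, hN c hc, map_zero]
    · intro g h hg hh
      show (g + h) x = 0
      rw [LinearMap.add_apply, hg, hh, add_zero]
  exact hx this
end
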